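/- Principal specialization of the sl_r denominator: (q^r;q^r)_∞^{r−1} · ∏_{1≤i<j≤r} (q^{j−i};q^r)_∞ (q^{r−j+i};q^r)_∞ = (q;q)_∞^r / (q^r;q^r)_∞, as formal power series in q. -/

import Mathlib

/-!
Principal specialization of the `sl_r` denominator identity:
`(q^r;q^r)_∞^{r−1} · ∏_{1≤i<j≤r} (q^{j−i};q^r)_∞ (q^{r−j+i};q^r)_∞ = (q;q)_∞^r / (q^r;q^r)_∞`,
as formal power series in `q`.  Pairs `1 ≤ i < j ≤ r` are encoded as pairs of
`Fin r` (0-indexed), so `j − i = p.2.val − p.1.val`.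
-/

noncomputable instance : TopologicalSpace (PowerSeries ℚ) :=
  TopologicalSpace.induced (fun f (n : ℕ) => (PowerSeries.coeff (R := ℚ) n) f) inferInstance

noncomputable def q : PowerSeries ℚ := PowerSeries.X

namespace SLRAux

open PowerSeries Filter Finset Topology

lemma phi_embedding : IsEmbedding (fun f (n : ℕ) => (PowerSeries.coeff (R := ℚ) n) f) :=
  ⟨⟨rfl⟩, fun f g h => PowerSeries.ext fun n => congrFun h n⟩

instance : T2Space (PowerSeries ℚ) := phi_embedding.t2Space

open Classical in
noncomputable def D (A : Set ℕ) (n : ℕ) : Finset ℕ :=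
  (Finset.Icc 1 n).filter (· ∈ A)

lemma mem_D {A : Set ℕ} {n e : ℕ} : e ∈ D A n ↔ (1 ≤ e ∧ e ≤ n) ∧ e ∈ A := by
  classical
  simp [D, Finset.mem_filter, Finset.mem_Icc]

noncomputable def Pfin (s : Finset ℕ) : PowerSeries ℚ := ∏ e ∈ s, (1 - q ^ e)

noncomputable def Lset (A : Set ℕ) : PowerSeries ℚ :=
  PowerSeries.mk fun n => (PowerSeries.coeff n) (Pfin (D A n))

lemma coeff_mul_congr {f f' g g' : PowerSeries ℚ} {n : ℕ}
    (hf : ∀ m ≤ n, coeff m f = coeff m f')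
    (hg : ∀ m ≤ n, coeff m g = coeff m g') :
    coeff n (f * g) = coeff n (f' * g') := by
  rw [coeff_mul, coeff_mul]
  apply Finset.sum_congr rfl
  intro p hp
  rw [Finset.HasAntidiagonal.mem_antidiagonal] at hp
  rw [hf p.1 (by omega), hg p.2 (by omega)]

lemma coeff_tail {s : Finset ℕ} {n : ℕ} (h : ∀ e ∈ s, n < e) :
    ∀ m ≤ n, coeff m (Pfin s) = coeff m (1 : PowerSeries ℚ) := by
  classical
  induction s using Finset.cons_induction with
  | empty => simp [Pfin]
  | cons e s he ih =>
    intro m hm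
    have he' : n < e := h e (Finset.mem_cons_self e s)
    have h1 : ∀ j ≤ n, coeff j (1 - q ^ e) = coeff j (1 : PowerSeries ℚ) := by
      intro j hj
      rw [map_sub, q, coeff_X_pow, if_neg (by omega)]
      ring
    have h2 := ih (fun x hx => h x (Finset.mem_cons_of_mem hx))
    have : coeff m (Pfin (Finset.cons e s he)) = coeff m ((1 : PowerSeries ℚ) * 1) := by
      rw [Pfin, Finset.prod_cons]
      exact coeff_mul_congr (fun j hj => h1 j (le_trans hj hm))
        (fun j hj => h2 j (le_trans hj hm))
    rw [this, one_mul]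

lemma coeff_prod_eq_D {A : Set ℕ} {n : ℕ} {s : Finset ℕ}
    (hs : ∀ e ∈ s, e ∈ A ∧ 1 ≤ e) (hsub : D A n ⊆ s) {m : ℕ} (hm : m ≤ n) :
    coeff m (Pfin s) = coeff m (Pfin (D A n)) := by
  classical
  have h1 : Pfin s = Pfin (s \ D A n) * Pfin (D A n) := by
    rw [Pfin, Pfin, Pfin, Finset.prod_sdiff hsub]
  have htail : ∀ e ∈ s \ D A n, n < e := by
    intro e hes
    rw [Finset.mem_sdiff] at hes
    obtain ⟨heA, he1⟩ := hs e hes.1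
    by_contra hne
    exact hes.2 (mem_D.2 ⟨⟨he1, by omega⟩, heA⟩)
  have h2 : coeff m (Pfin (s \ D A n) * Pfin (D A n)) =
      coeff m ((1 : PowerSeries ℚ) * Pfin (D A n)) :=
    coeff_mul_congr (fun j hj => coeff_tail htail j (le_trans hj hm)) (fun _ _ => rfl)
  rw [h1, h2, one_mul]

lemma coeff_Lset {A : Set ℕ} (hA : ∀ e ∈ A, 1 ≤ e) {n m : ℕ} (hm : m ≤ n) :
    coeff m (Lset A) = coeff m (Pfin (D A n)) := by
  rw [Lset, coeff_mk]
  exact (coeff_prod_eq_D (fun e he => ⟨(mem_D.1 he).2, (mem_D.1 he).1.1⟩)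
    (fun e he => mem_D.2 ⟨⟨(mem_D.1 he).1.1, le_trans (mem_D.1 he).1.2 hm⟩, (mem_D.1 he).2⟩)
    (le_refl m)).symm

lemma hasProd_Lset {ι : Type} (a : ι → ℕ) (ha : Function.Injective a) (h1 : ∀ i, 1 ≤ a i) :
    HasProd (fun i => 1 - q ^ (a i)) (Lset (Set.range a)) := by
  classical
  rw [HasProd, SummationFilter.unconditional_filter, phi_embedding.tendsto_nhds_iff, tendsto_pi_nhds]
  intro n
  apply Tendsto.congr' (f₁ := fun _ => coeff n (Lset (Set.range a)))
  · rw [Filter.EventuallyEq, eventually_atTop]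
    refine ⟨(D (Set.range a) n).preimage a ha.injOn, fun s hs => ?_⟩
    have himg : ∀ e ∈ s.image a, e ∈ Set.range a ∧ 1 ≤ e := by
      intro e he
      obtain ⟨i, _, rfl⟩ := Finset.mem_image.1 he
      exact ⟨Set.mem_range_self i, h1 i⟩
    have hsub : D (Set.range a) n ⊆ s.image a := by
      intro e he
      obtain ⟨i, rfl⟩ := (mem_D.1 he).2
      exact Finset.mem_image_of_mem a (hs (Finset.mem_preimage.2 he))
    have : (∏ i ∈ s, (1 - q ^ (a i))) = Pfin (s.image a) := by
      rw [Pfin, Finset.prod_image (fun x _ y _ h => ha h)]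
    show coeff n (Lset (Set.range a)) = coeff n (∏ i ∈ s, (1 - q ^ (a i)))
    rw [this, coeff_Lset (fun e he => by obtain ⟨i, rfl⟩ := he; exact h1 i) (le_refl n),
      coeff_prod_eq_D himg hsub (le_refl n)]
  · exact tendsto_const_nhds

lemma tprod_eq_Lset {ι : Type} (a : ι → ℕ) (ha : Function.Injective a) (h1 : ∀ i, 1 ≤ a i) :
    ∏' i, (1 - q ^ (a i)) = Lset (Set.range a) :=
  (hasProd_Lset a ha h1).tprod_eq

lemma coeff_prod_congr {κ : Type} (s : Finset κ) (f g : κ → PowerSeries ℚ) {n : ℕ}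
    (h : ∀ k ∈ s, ∀ m ≤ n, coeff m (f k) = coeff m (g k)) :
    ∀ m ≤ n, coeff m (∏ k ∈ s, f k) = coeff m (∏ k ∈ s, g k) := by
  classical
  induction s using Finset.cons_induction with
  | empty => intro m _; rfl
  | cons c t hc ih =>
    intro m hm
    rw [Finset.prod_cons, Finset.prod_cons]
    exact coeff_mul_congr
      (fun j hj => h c (Finset.mem_cons_self c t) j (le_trans hj hm))
      (fun j hj => ih (fun k hk => h k (Finset.mem_cons_of_mem hk)) j (le_trans hj hm))

lemma Lset_prod {κ : Type} (s : Finset κ) (A : κ → Set ℕ)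
    (hA : ∀ k ∈ s, ∀ e ∈ A k, 1 ≤ e)
    (hdisj : ∀ k ∈ s, ∀ l ∈ s, k ≠ l → Disjoint (A k) (A l)) :
    ∏ k ∈ s, Lset (A k) = Lset (⋃ k ∈ s, A k) := by
  classical
  ext n
  have hU : ∀ e ∈ (⋃ k ∈ s, A k), 1 ≤ e := by
    intro e he
    rw [Set.mem_iUnion₂] at he
    obtain ⟨k, hk, he⟩ := he
    exact hA k hk e he
  have hDU : D (⋃ k ∈ s, A k) n = s.biUnion (fun k => D (A k) n) := by
    ext e
    simp only [mem_D, Finset.mem_biUnion, Set.mem_iUnion₂]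
    constructor
    · rintro ⟨hb, k, hk, he⟩; exact ⟨k, hk, hb, he⟩
    · rintro ⟨k, hk, hb, he⟩; exact ⟨hb, k, hk, he⟩
  have hstep : coeff n (∏ k ∈ s, Lset (A k)) = coeff n (∏ k ∈ s, Pfin (D (A k) n)) :=
    coeff_prod_congr s _ _ (fun k hk m hm => coeff_Lset (hA k hk) hm) n (le_refl n)
  have hdisjD : (s : Set κ).PairwiseDisjoint (fun k => D (A k) n) := by
    intro k hk l hl hkl
    rw [Function.onFun, Finset.disjoint_left]
    intro e hek hel
    exact (Set.disjoint_left.1 (hdisj k hk l hl hkl)) (mem_D.1 hek).2 (mem_D.1 hel).2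
  have hbi : (∏ k ∈ s, Pfin (D (A k) n)) = Pfin (s.biUnion (fun k => D (A k) n)) := by
    rw [Pfin, Finset.prod_biUnion hdisjD]
    rfl
  rw [hstep, hbi, ← hDU, Lset, coeff_mk]

def AP (r d : ℕ) : Set ℕ := Set.range (fun m => d + r * m)

lemma AP_inj {r : ℕ} (hr : 1 ≤ r) (d : ℕ) : Function.Injective (fun m => d + r * m) := by
  intro x y h
  simp only [add_right_inj] at h
  exact Nat.eq_of_mul_eq_mul_left (by omega) h

lemma AP_one_le {r d : ℕ} (hd : 1 ≤ d) : ∀ e ∈ AP r d, 1 ≤ e := by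
  rintro e ⟨m, rfl⟩
  show 1 ≤ d + r * m
  omega

lemma mem_AP {r d e : ℕ} (hr : 1 ≤ r) (hd1 : 1 ≤ d) (hdr : d ≤ r) :
    e ∈ AP r d ↔ 1 ≤ e ∧ e % r = d % r := by
  constructor
  · rintro ⟨m, rfl⟩
    show 1 ≤ d + r * m ∧ (d + r * m) % r = d % r
    exact ⟨by omega, Nat.add_mul_mod_self_left d r m⟩
  · rintro ⟨he1, hm⟩
    have hde : d ≤ e := by
      rcases Nat.lt_or_ge e d with hlt | hde
      · exfalso
        have h1 : e % r = e := Nat.mod_eq_of_lt (by omega)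
        by_cases h : d = r
        · subst h; rw [Nat.mod_self] at hm; omega
        · rw [Nat.mod_eq_of_lt (show d < r by omega)] at hm; omega
      · exact hde
    obtain ⟨m, hm'⟩ := (Nat.modEq_iff_dvd' hde).mp hm.symm
    refine ⟨m, ?_⟩
    show d + r * m = e
    omega

lemma AP_disjoint {r d₁ d₂ : ℕ} (hr : 1 ≤ r) (h1 : 1 ≤ d₁) (h1r : d₁ ≤ r)
    (h2 : 1 ≤ d₂) (h2r : d₂ ≤ r) (hne : d₁ ≠ d₂) : Disjoint (AP r d₁) (AP r d₂) := by
  rw [Set.disjoint_left]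
  intro e he1 he2
  rw [mem_AP hr h1 h1r] at he1
  rw [mem_AP hr h2 h2r] at he2
  have hmod : d₁ % r = d₂ % r := by omega
  apply hne
  by_cases ha : d₁ = r <;> by_cases hb : d₂ = r
  · omega
  · have t2 : d₂ % r = d₂ := Nat.mod_eq_of_lt (by omega)
    have t1 : d₁ % r = 0 := by rw [ha]; exact Nat.mod_self r
    omega
  · have t1 : d₁ % r = d₁ := Nat.mod_eq_of_lt (by omega)
    have t2 : d₂ % r = 0 := by rw [hb]; exact Nat.mod_self r
    omega
  · have t1 : d₁ % r = d₁ := Nat.mod_eq_of_lt (by omega)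
    have t2 : d₂ % r = d₂ := Nat.mod_eq_of_lt (by omega)
    omega

lemma AP_union {r : ℕ} (hr : 1 ≤ r) :
    (⋃ k ∈ Finset.range r, AP r (k + 1)) = Set.range (fun i : ℕ => i + 1) := by
  ext e
  simp only [Set.mem_iUnion₂, Finset.mem_range, Set.mem_range]
  constructor
  · rintro ⟨k, hk, he⟩
    have := AP_one_le (r := r) (d := k + 1) (by omega) e he
    exact ⟨e - 1, by omega⟩
  · rintro ⟨i, rfl⟩
    have hir : (i + 1) % r < r := Nat.mod_lt _ (by omega)
    by_cases h0 : (i + 1) % r = 0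
    · refine ⟨r - 1, by omega, ?_⟩
      rw [mem_AP hr (by omega) (by omega)]
      have h : r - 1 + 1 = r := by omega
      rw [h, Nat.mod_self]
      omega
    · refine ⟨(i + 1) % r - 1, by omega, ?_⟩
      rw [mem_AP hr (by omega) (by omega)]
      have h1 : (i + 1) % r - 1 + 1 = (i + 1) % r := by omega
      rw [h1, Nat.mod_eq_of_lt hir]
      omega

lemma constCoeff_Lset (A : Set ℕ) : PowerSeries.constantCoeff (Lset A) = 1 := by
  classical
  rw [← coeff_zero_eq_constantCoeff_apply, Lset, coeff_mk]
  have h : D A 0 = ∅ := by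
    rw [Finset.eq_empty_iff_forall_notMem]
    intro e he
    have := (mem_D.1 he).1
    omega
  rw [h, Pfin, Finset.prod_empty]
  simp

lemma card_fiber (r d : ℕ) (hd : 1 ≤ d) :
    ((Finset.univ.filter (fun p : Fin r × Fin r => p.1 < p.2)).filter
      (fun p => p.2.val - p.1.val = d)).card = r - d := by
  rw [← Finset.card_range (r - d)]
  refine Finset.card_bij' (fun p _ => p.1.val)
    (fun k hk => (⟨k, by simp only [Finset.mem_range] at hk; omega⟩,
      ⟨k + d, by simp only [Finset.mem_range] at hk; omega⟩)) ?_ ?_ ?_ ?_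
  · intro p hp
    simp only [Finset.mem_filter, Finset.mem_univ, true_and, Fin.lt_def] at hp
    simp only [Finset.mem_range]
    have := p.2.isLt
    omega
  · intro k hk
    simp only [Finset.mem_filter, Finset.mem_univ, true_and, Fin.lt_def]
    constructor
    · show k < k + d
      omega
    · show k + d - k = d
      omega
  · intro p hp
    simp only [Finset.mem_filter, Finset.mem_univ, true_and, Fin.lt_def] at hp
    have h2 : p.2.val = p.1.val + d := by omega
    refine Prod.ext (Fin.ext rfl) (Fin.ext ?_)
    exact h2.symm
  · intro k hk
    rfl

lemma pair_prod (r : ℕ) (g : ℕ → PowerSeries ℚ) :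
    ∏ p ∈ Finset.univ.filter (fun p : Fin r × Fin r => p.1 < p.2), g (p.2.val - p.1.val)
      = ∏ d ∈ Finset.Icc 1 (r - 1), g d ^ (r - d) := by
  classical
  rw [← Finset.prod_fiberwise_of_maps_to'
    (g := fun p : Fin r × Fin r => p.2.val - p.1.val) (t := Finset.Icc 1 (r - 1))
    (fun p hp => by
      simp only [Finset.mem_filter, Finset.mem_univ, true_and, Fin.lt_def] at hp
      simp only [Finset.mem_Icc]
      have := p.2.isLt
      omega) g]
  apply Finset.prod_congr rfl
  intro d hd
  rw [Finset.prod_const, card_fiber r d (Finset.mem_Icc.1 hd).1]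

lemma prod_reflect (r : ℕ) (F : ℕ → PowerSeries ℚ) :
    ∏ d ∈ Finset.Icc 1 (r - 1), F d = ∏ d ∈ Finset.Icc 1 (r - 1), F (r - d) := by
  refine Finset.prod_bij' (fun d _ => r - d) (fun d _ => r - d) ?_ ?_ ?_ ?_ ?_
  · intro d hd
    simp only [Finset.mem_Icc] at hd ⊢
    omega
  · intro d hd
    simp only [Finset.mem_Icc] at hd ⊢
    omega
  · intro d hd
    simp only [Finset.mem_Icc] at hd
    show r - (r - d) = d
    omega
  · intro d hd
    simp only [Finset.mem_Icc] at hd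
    show r - (r - d) = d
    omega
  · intro d hd
    simp only [Finset.mem_Icc] at hd
    have he : r - (r - d) = d := by omega
    rw [he]

lemma prod_Icc_one (m : ℕ) (h : ℕ → PowerSeries ℚ) :
    ∏ d ∈ Finset.Icc 1 m, h d = ∏ k ∈ Finset.range m, h (k + 1) := by
  refine Finset.prod_bij' (fun d _ => d - 1) (fun k _ => k + 1) ?_ ?_ ?_ ?_ ?_
  · intro d hd
    simp only [Finset.mem_Icc] at hd
    simp only [Finset.mem_range]
    omega
  · intro k hk
    simp only [Finset.mem_range] at hk
    simp only [Finset.mem_Icc]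
    omega
  · intro d hd
    simp only [Finset.mem_Icc] at hd
    show d - 1 + 1 = d
    omega
  · intro k hk
    show k + 1 - 1 = k
    omega
  · intro d hd
    simp only [Finset.mem_Icc] at hd
    have he : d - 1 + 1 = d := by omega
    rw [he]

end SLRAux

open SLRAux


theorem principal_specialization_denominator (r : ℕ) (hr : 1 ≤ r) :
    (∏' i : ℕ, (1 - q ^ (r * (i + 1)))) ^ (r - 1) *
      ∏ p ∈ Finset.univ.filter (fun p : Fin r × Fin r => p.1 < p.2),
        ((∏' m : ℕ, (1 - q ^ ((p.2.val - p.1.val) + r * m))) *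
         (∏' m : ℕ, (1 - q ^ ((r - (p.2.val - p.1.val)) + r * m)))) =
    (∏' i : ℕ, (1 - q ^ (i + 1))) ^ r * (∏' i : ℕ, (1 - q ^ (r * (i + 1))))⁻¹ := by
  classical
  obtain ⟨t, rfl⟩ : ∃ t, r = t + 1 := ⟨r - 1, by omega⟩
  have hL1 : (∏' i : ℕ, (1 - q ^ ((t + 1) * (i + 1)))) = Lset (AP (t + 1) (t + 1)) := by
    have h1 : ∀ i : ℕ, (1 - q ^ ((t + 1) * (i + 1))) = (1 - q ^ ((t + 1) + (t + 1) * i)) := by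
      intro i
      rw [show (t + 1) * (i + 1) = (t + 1) + (t + 1) * i from by ring]
    rw [tprod_congr h1]
    exact tprod_eq_Lset (fun m => (t + 1) + (t + 1) * m) (AP_inj hr (t + 1))
      (fun m => by show 1 ≤ (t + 1) + (t + 1) * m; omega)
  have hbig : (∏ p ∈ Finset.univ.filter (fun p : Fin (t + 1) × Fin (t + 1) => p.1 < p.2),
        ((∏' m : ℕ, (1 - q ^ ((p.2.val - p.1.val) + (t + 1) * m))) *
         (∏' m : ℕ, (1 - q ^ (((t + 1) - (p.2.val - p.1.val)) + (t + 1) * m)))))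
      = ∏ p ∈ Finset.univ.filter (fun p : Fin (t + 1) × Fin (t + 1) => p.1 < p.2),
        (Lset (AP (t + 1) (p.2.val - p.1.val)) *
          Lset (AP (t + 1) ((t + 1) - (p.2.val - p.1.val)))) := by
    refine Finset.prod_congr rfl fun p hp => ?_
    simp only [Finset.mem_filter, Finset.mem_univ, true_and, Fin.lt_def] at hp
    have hd1 : 1 ≤ p.2.val - p.1.val := by omega
    have hd2 : p.2.val - p.1.val ≤ t := by
      have := p.2.isLt
      omega
    congr 1
    · exact tprod_eq_Lset (fun m => (p.2.val - p.1.val) + (t + 1) * m) (AP_inj hr _)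
        (fun m => by show 1 ≤ (p.2.val - p.1.val) + (t + 1) * m; omega)
    · exact tprod_eq_Lset (fun m => ((t + 1) - (p.2.val - p.1.val)) + (t + 1) * m)
        (AP_inj hr _)
        (fun m => by show 1 ≤ ((t + 1) - (p.2.val - p.1.val)) + (t + 1) * m; omega)
  have hfull : (∏' i : ℕ, (1 - q ^ (i + 1)))
      = ∏ k ∈ Finset.range (t + 1), Lset (AP (t + 1) (k + 1)) := by
    rw [tprod_eq_Lset (fun i => i + 1) (fun x y h => by simpa using h) (fun i => by show 1 ≤ i + 1; omega),
      ← AP_union hr]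
    refine (Lset_prod (Finset.range (t + 1)) (fun k => AP (t + 1) (k + 1))
      (fun k hk => AP_one_le (by omega)) (fun k hk l hl hkl => ?_)).symm
    rw [Finset.mem_range] at hk hl
    exact AP_disjoint hr (by omega) (by omega) (by omega) (by omega) (by omega)
  rw [hL1, hbig, hfull, Finset.prod_mul_distrib,
    pair_prod (t + 1) (fun d => Lset (AP (t + 1) d)),
    pair_prod (t + 1) (fun d => Lset (AP (t + 1) ((t + 1) - d))),
    prod_reflect (t + 1) (fun d => Lset (AP (t + 1) ((t + 1) - d)) ^ ((t + 1) - d))]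
  have hmerge : (∏ d ∈ Finset.Icc 1 (t + 1 - 1), Lset (AP (t + 1) d) ^ ((t + 1) - d)) *
      (∏ d ∈ Finset.Icc 1 (t + 1 - 1),
        Lset (AP (t + 1) ((t + 1) - ((t + 1) - d))) ^ ((t + 1) - ((t + 1) - d)))
      = ∏ d ∈ Finset.Icc 1 (t + 1 - 1), Lset (AP (t + 1) d) ^ (t + 1) := by
    rw [← Finset.prod_mul_distrib]
    refine Finset.prod_congr rfl fun d hd => ?_
    rw [Finset.mem_Icc] at hd
    rw [show (t + 1) - ((t + 1) - d) = d from by omega, ← pow_add,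
      show (t + 1) - d + d = t + 1 from by omega]
  rw [hmerge]
  have hIcc : (∏ d ∈ Finset.Icc 1 (t + 1 - 1), Lset (AP (t + 1) d) ^ (t + 1))
      = (∏ k ∈ Finset.range (t + 1 - 1), Lset (AP (t + 1) (k + 1))) ^ (t + 1) := by
    rw [prod_Icc_one (t + 1 - 1) (fun d => Lset (AP (t + 1) d) ^ (t + 1)), Finset.prod_pow]
  rw [hIcc, Finset.prod_range_succ]
  simp only [Nat.add_sub_cancel]
  set P := Lset (AP (t + 1) (t + 1)) with hP
  set C := ∏ k ∈ Finset.range t, Lset (AP (t + 1) (k + 1)) with hC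
  have hunit : P * P⁻¹ = 1 :=
    PowerSeries.mul_inv_cancel P (by rw [hP, constCoeff_Lset]; norm_num)
  have h2 : (C * P) ^ (t + 1) * P⁻¹ = C ^ (t + 1) * P ^ t * (P * P⁻¹) := by
    ring
  rw [h2, hunit, mul_one]
  ring
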